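/- Let κ be an inaccessible cardinal with 2^κ = κ⁺. Then there exist functions f, g : κ → κ with values infinite regular cardinals below κ such that: (1) 2^{g(ν)} < f(ν) for all ν < κ; (2) if ν < ν* then |ν| ≤ g(ν) ≤ g(ν*); and (3) there is a family {G_ξ}_{ξ < κ⁺} with G_ξ(ν) ∈ [2^{f(ν)}]^{g(ν)} such that for every F ∈ ∏_{ν<κ} 2^{f(ν)} there are ξ < κ⁺ and β < κ with F(ν) ∈ G_ξ(ν) for all ν ∈ κ \ β. -/

import Mathlib

open Cardinal Ordinal

universe u

theorem stmt9 (κ : Cardinal.{u}) (hκ : κ.IsInaccessible)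
    (h2 : (2 : Cardinal) ^ κ = Order.succ κ) :
    ∃ f g : Ordinal.{u} → Cardinal.{u},
      (∀ ν < κ.ord, (f ν).IsRegular ∧ (g ν).IsRegular ∧ f ν < κ ∧ g ν < κ) ∧
      (∀ ν < κ.ord, (2 : Cardinal) ^ g ν < f ν) ∧
      (∀ ν ν' : Ordinal, ν < ν' → ν' < κ.ord → ν.card ≤ g ν ∧ g ν ≤ g ν') ∧
      ∃ G : Ordinal.{u} → Ordinal.{u} → Set Ordinal.{u},
        (∀ ξ < (Order.succ κ).ord, ∀ ν < κ.ord,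
          G ξ ν ⊆ Set.Iio (((2 : Cardinal) ^ f ν).ord) ∧
            #↥(G ξ ν) = Cardinal.lift.{u + 1} (g ν)) ∧
        ∀ F : Ordinal.{u} → Ordinal.{u},
          (∀ ν < κ.ord, F ν < ((2 : Cardinal) ^ f ν).ord) →
          ∃ ξ < (Order.succ κ).ord, ∃ β < κ.ord,
            ∀ ν, β ≤ ν → ν < κ.ord → F ν ∈ G ξ ν := by
  classical
  obtain ⟨hℵ0, hreg, hsl⟩ := hκ
  set g : Ordinal.{u} → Cardinal.{u} := fun ν => Order.succ (ν.card ⊔ ℵ₀) with hgdef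
  set f : Ordinal.{u} → Cardinal.{u} := fun ν => Order.succ ((2 : Cardinal) ^ g ν) with hfdef
  have hsucclt : ∀ c < κ, Order.succ c < κ := fun c hc =>
    lt_of_le_of_lt (Order.succ_le_of_lt (Cardinal.cantor c)) (hsl hc)
  have hgℵ0 : ∀ ν, ℵ₀ ≤ g ν := fun ν => le_sup_right.trans (Order.le_succ _)
  have hgκ : ∀ ν < κ.ord, g ν < κ := by
    intro ν hν
    exact hsucclt _ (sup_lt_iff.mpr ⟨Cardinal.lt_ord.mp hν, hℵ0⟩)
  have hfκ : ∀ ν < κ.ord, f ν < κ := fun ν hν =>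
    hsucclt _ (hsl (hgκ ν hν))
  have hgf : ∀ ν, (2 : Cardinal) ^ g ν < f ν := fun ν => Order.lt_succ _
  have hg2f : ∀ ν, g ν < (2 : Cardinal) ^ f ν := fun ν =>
    lt_of_le_of_lt (Cardinal.cantor (g ν)).le ((hgf ν).trans_le (Cardinal.cantor (f ν)).le)
  -- the enumeration
  have hκκ : (Cardinal.lift.{u+1} κ) ^ (Cardinal.lift.{u+1} κ) = Cardinal.lift.{u+1} (Order.succ κ) := by
    rw [← Cardinal.lift_power, ← h2]
    congr 1
    apply le_antisymm
    · calc κ ^ κ ≤ ((2 : Cardinal) ^ κ) ^ κ :=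
            Cardinal.power_le_power_right (Cardinal.cantor κ).le
        _ = (2 : Cardinal) ^ (κ * κ) := (Cardinal.power_mul).symm
        _ = (2 : Cardinal) ^ κ := by rw [Cardinal.mul_eq_self hℵ0.le]
    · exact Cardinal.power_le_power_right (le_trans (by exact_mod_cast (Cardinal.nat_lt_aleph0 2).le) hℵ0.le)
  have hmkT : #(↥(Set.Iio κ.ord) → ↥(Set.Iio κ.ord)) = #(↥(Set.Iio (Order.succ κ).ord)) := by
    rw [Cardinal.mk_arrow, Ordinal.mk_Iio_ordinal, Ordinal.mk_Iio_ordinal, Cardinal.card_ord,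
      Cardinal.card_ord, Cardinal.lift_id]
    exact hκκ
  obtain ⟨e⟩ := Cardinal.eq.mp hmkT
  set G : Ordinal.{u} → Ordinal.{u} → Set Ordinal.{u} := fun ξ ν =>
    Set.Iio ((g ν).ord) ∪ {x | x < (((2 : Cardinal) ^ f ν).ord) ∧
      ∃ (hξ : ξ < (Order.succ κ).ord) (hν : ν < κ.ord),
        x = ((e.symm ⟨ξ, hξ⟩) ⟨ν, hν⟩ : Ordinal)} with hGdef
  refine ⟨f, g, ?_, fun ν _ => hgf ν, ?_, G, ?_, ?_⟩
  · intro ν hν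
    refine ⟨Cardinal.isRegular_succ ((hgℵ0 ν).trans (Cardinal.cantor _).le),
      Cardinal.isRegular_succ le_sup_right, hfκ ν hν, hgκ ν hν⟩
  · intro ν ν' hνν' _
    exact ⟨le_sup_left.trans (Order.le_succ _),
      Order.succ_le_succ (sup_le_sup_right (Ordinal.card_le_card hνν'.le) _)⟩
  · intro ξ hξ ν hν
    constructor
    · intro x hx
      rcases hx with hx | hx
      · exact lt_of_lt_of_le hx (Cardinal.ord_le_ord.mpr (hg2f ν).le)
      · exact hx.1
    · apply le_antisymm
      · have hsub : G ξ ν ⊆ insert ((e.symm ⟨ξ, hξ⟩) ⟨ν, hν⟩ : Ordinal) (Set.Iio ((g ν).ord)) := by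
          intro x hx
          rcases hx with hx | hx
          · exact Set.mem_insert_of_mem _ hx
          · obtain ⟨hξ', hν', hx⟩ := hx.2
            exact Set.mem_insert_iff.mpr (Or.inl hx)
        calc #↥(G ξ ν) ≤ #↥(insert ((e.symm ⟨ξ, hξ⟩) ⟨ν, hν⟩ : Ordinal) (Set.Iio ((g ν).ord))) :=
              Cardinal.mk_le_mk_of_subset hsub
          _ ≤ #↥(Set.Iio ((g ν).ord)) + 1 := Cardinal.mk_insert_le
          _ = #↥(Set.Iio ((g ν).ord)) := by
              apply Cardinal.add_one_eq
              rw [Ordinal.mk_Iio_ordinal, Cardinal.card_ord]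
              exact Cardinal.aleph0_le_lift.mpr (hgℵ0 ν)
          _ = Cardinal.lift.{u+1} (g ν) := by
              rw [Ordinal.mk_Iio_ordinal, Cardinal.card_ord]
      · calc Cardinal.lift.{u+1} (g ν) = #↥(Set.Iio ((g ν).ord)) := by
              rw [Ordinal.mk_Iio_ordinal, Cardinal.card_ord]
          _ ≤ #↥(G ξ ν) := Cardinal.mk_le_mk_of_subset Set.subset_union_left
  · intro F hF
    have h2fκ : ∀ ν : ↥(Set.Iio κ.ord), ((2 : Cardinal) ^ f ν).ord ≤ κ.ord :=
      fun ν => Cardinal.ord_le_ord.mpr (hsl (hfκ ν ν.2)).le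
    set F' : ↥(Set.Iio κ.ord) → ↥(Set.Iio κ.ord) :=
      fun ν => ⟨F ν, lt_of_lt_of_le (hF ν ν.2) (h2fκ ν)⟩ with hF'def
    refine ⟨(e F').1, (e F').2, 0, ?_, ?_⟩
    · rw [Cardinal.lt_ord, Ordinal.card_zero]
      exact aleph0_pos.trans hℵ0
    · intro ν _ hν
      right
      refine ⟨hF ν hν, (e F').2, hν, ?_⟩
      have : (⟨(e F').1, (e F').2⟩ : ↥(Set.Iio (Order.succ κ).ord)) = e F' := rfl
      rw [this, Equiv.symm_apply_apply]
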